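/- arXiv:1907.09306 — 6 statements merged into one kernel-verified Lean document; each statement's English description precedes it below -/
import Mathlib

section
/- Every I-Luzin set is I-nonmeasurable if and only if I is tall. That is: (every set L such that |L ∩ I'| < |L| for all I' ∈ I fails to belong to the σ-field generated by Borel sets and I) if and only if (every Borel set not in I contains a perfect subset belonging to I). -/
open Cardinal

section Aux

variable {X : Type*} [TopologicalSpace X] [PolishSpace X]

/-- A Polish space has cardinality at most continuum. -/
lemma aux_card_le_continuum : #X ≤ 𝔠 := by
  letI := TopologicalSpace.upgradeIsCompletelyMetrizable X
  obtain ⟨D, Dcnt, Ddense⟩ := TopologicalSpace.exists_countable_dense X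
  have hseq : ∀ x : X, ∃ u : ℕ → X, (∀ n, u n ∈ D) ∧
      Filter.Tendsto u Filter.atTop (nhds x) := by
    intro x
    have hx : x ∈ closure D := Ddense x
    rwa [mem_closure_iff_seq_limit] at hx
  choose u hu hconv using hseq
  have hinj : Function.Injective (fun x => (fun n => (⟨u x n, hu x n⟩ : D) : ℕ → D)) := by
    intro x y hxy
    have huv : u x = u y := by
      funext n
      exact congrArg Subtype.val (congrFun hxy n)
    exact tendsto_nhds_unique (hconv x) (huv ▸ hconv y)
  calc #X ≤ #(ℕ → D) := Cardinal.mk_le_of_injective hinj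
    _ = Cardinal.lift.{0} #D ^ (ℵ₀ : Cardinal) := by
        rw [Cardinal.mk_arrow, Cardinal.mk_nat, Cardinal.lift_aleph0]
    _ ≤ (ℵ₀ : Cardinal) ^ (ℵ₀ : Cardinal) := by
        refine Cardinal.power_le_power_right ?_
        rw [Cardinal.lift_uzero]
        haveI := Dcnt.to_subtype
        exact Cardinal.mk_le_aleph0
    _ = 𝔠 := Cardinal.aleph0_power_aleph0

/-- A nonempty perfect set in a Polish space has cardinality at least continuum. -/
lemma aux_perfect_card {P : Set X} (hP : Perfect P) (hne : P.Nonempty) : 𝔠 ≤ #P := by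
  letI := TopologicalSpace.upgradeIsCompletelyMetrizable X
  obtain ⟨f, hrange, -, hinj⟩ := hP.exists_nat_bool_injection hne
  have hinj' : Function.Injective
      (fun a : ULift.{_} (ℕ → Bool) => (⟨f a.down, hrange (Set.mem_range_self a.down)⟩ : P)) :=
    fun a b h => ULift.ext a b (hinj (congrArg Subtype.val h))
  have hc : #(ℕ → Bool) = 𝔠 := by
    rw [← Cardinal.power_def, Cardinal.mk_bool, Cardinal.mk_nat, Cardinal.two_power_aleph0]
  calc 𝔠 = Cardinal.lift #(ℕ → Bool) := by rw [hc, Cardinal.lift_continuum]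
    _ = #(ULift (ℕ → Bool)) := (Cardinal.mk_uLift _).symm
    _ ≤ #P := Cardinal.mk_le_of_injective hinj'

/-- In the Cantor space, every point is an accumulation point of the whole space. -/
lemma aux_cantor_acc (a : ℕ → Bool) (U : Set (ℕ → Bool)) (hU : U ∈ nhds a) :
    ∃ b ∈ U, b ≠ a := by
  set b : ℕ → (ℕ → Bool) := fun n => Function.update a n (!(a n)) with hb
  have htend : Filter.Tendsto b Filter.atTop (nhds a) := by
    rw [tendsto_pi_nhds]
    intro i
    have hev : ∀ᶠ n in Filter.atTop, b n i = a i := by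
      rw [Filter.eventually_atTop]
      exact ⟨i + 1, fun n hn => Function.update_of_ne (by omega) _ _⟩
    exact tendsto_const_nhds.congr' (hev.mono fun n h => h.symm)
  obtain ⟨n, hn⟩ := (htend.eventually_mem hU).exists
  refine ⟨b n, hn, fun h => ?_⟩
  have h' : (!(a n)) = a n := by simpa [hb] using congrFun h n
  exact Bool.not_ne_self (a n) h'

/-- Any uncountable Borel set in a Polish space contains a nonempty perfect subset. -/
lemma aux_perfect_of_unc [MeasurableSpace X] [BorelSpace X] {D : Set X}
    (hD : MeasurableSet D) (hunc : ¬ D.Countable) :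
    ∃ P, P ⊆ D ∧ Perfect P ∧ P.Nonempty := by
  have hex : ∃ f : (ℕ → Bool) → X, Set.range f ⊆ D ∧ Continuous f ∧ Function.Injective f := by
    obtain ⟨t', ht'le, ht'polish, ht'closed, -⟩ := hD.isClopenable
    obtain ⟨f, hrange, hcont', hinj⟩ :=
      @IsClosed.exists_nat_bool_injection_of_not_countable X t' ht'polish D ht'closed hunc
    exact ⟨f, hrange, continuous_le_rng ht'le hcont', hinj⟩
  obtain ⟨f, hrange, hcont, hinj⟩ := hex
  refine ⟨Set.range f, hrange, ⟨(isCompact_range hcont).isClosed, ?_⟩, Set.range_nonempty f⟩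
  rintro x ⟨a, rfl⟩
  rw [accPt_iff_nhds]
  intro U hU
  have hpre : f ⁻¹' U ∈ nhds a := hcont.continuousAt.preimage_mem_nhds hU
  obtain ⟨b, hbU, hba⟩ := aux_cantor_acc a _ hpre
  exact ⟨f b, ⟨hbU, Set.mem_range_self b⟩, fun h => hba (hinj h)⟩

/-- Countable sets belong to the ideal. -/
lemma aux_ctbl_mem {I : Set (Set X)}
    (hunion : ∀ f : ℕ → Set X, (∀ n, f n ∈ I) → (⋃ n, f n) ∈ I)
    (hsing : ∀ x : X, ({x} : Set X) ∈ I)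
    (hempty : ∅ ∈ I) {s : Set X} (hs : s.Countable) : s ∈ I := by
  rcases s.eq_empty_or_nonempty with rfl | hne
  · exact hempty
  · obtain ⟨g, rfl⟩ := hs.exists_eq_range hne
    have : Set.range g = ⋃ n, {g n} := by
      ext x; simp [Set.mem_iUnion, eq_comm]
    rw [this]
    exact hunion _ fun n => hsing (g n)

end Aux

/-- Every I-Luzin set is I-nonmeasurable iff I is tall. -/
theorem stmt_0 {X : Type*} [TopologicalSpace X] [PolishSpace X]
    [MeasurableSpace X] [BorelSpace X] (I : Set (Set X))
    (hdown : ∀ A B : Set X, A ⊆ B → B ∈ I → A ∈ I)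
    (hunion : ∀ f : ℕ → Set X, (∀ n, f n ∈ I) → (⋃ n, f n) ∈ I)
    (hnontriv : (Set.univ : Set X) ∉ I)
    (hsing : ∀ x : X, ({x} : Set X) ∈ I)
    (hbase : ∀ A ∈ I, ∃ B : Set X, MeasurableSet B ∧ A ⊆ B ∧ B ∈ I) :
    (∀ L : Set X, (∀ I' ∈ I, #(↥(L ∩ I')) < #(↥L)) →
      ¬ @MeasurableSet X (MeasurableSpace.generateFrom {s : Set X | MeasurableSet s ∨ s ∈ I}) L)
    ↔
    (∀ B : Set X, MeasurableSet B → B ∉ I →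
      ∃ P ⊆ B, Perfect P ∧ P.Nonempty ∧ P ∈ I) := by
  constructor
  · -- forward direction, by contraposition
    intro hLuzin
    by_contra htall
    push_neg at htall
    obtain ⟨B, hBmeas, hBI, hBnoperf⟩ := htall
    refine hLuzin B ?_ (MeasurableSpace.measurableSet_generateFrom (Or.inl hBmeas))
    intro I' hI'
    have hempty : (∅ : Set X) ∈ I := hdown ∅ I' (Set.empty_subset _) hI'
    have hBunc : ¬ B.Countable := fun hc =>
      hBI (aux_ctbl_mem hunion hsing hempty hc)
    obtain ⟨C, hCmeas, hsub, hCI⟩ := hbase I' hI'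
    have hcnt : (B ∩ C).Countable := by
      by_contra h
      obtain ⟨P, hPsub, hPperf, hPne⟩ := aux_perfect_of_unc (hBmeas.inter hCmeas) h
      exact hBnoperf P (hPsub.trans Set.inter_subset_left) hPperf hPne
        (hdown P C (hPsub.trans Set.inter_subset_right) hCI)
    have hBI'cnt : (B ∩ I').Countable :=
      hcnt.mono (Set.inter_subset_inter_right _ hsub)
    have h1 : #(↥(B ∩ I')) ≤ ℵ₀ := by
      haveI := hBI'cnt.to_subtype
      exact Cardinal.mk_le_aleph0
    have h2 : ℵ₀ < #(↥B) := by
      rw [← not_le]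
      intro hle
      exact hBunc (Set.countable_coe_iff.mp (Cardinal.mk_le_aleph0_iff.mp hle))
    exact lt_of_le_of_lt h1 h2
  · -- backward direction
    intro htall L hLuzin hmeas
    have hempty : (∅ : Set X) ∈ I := by
      by_contra h
      obtain ⟨P, hP, -, hPne, -⟩ := htall ∅ MeasurableSet.empty h
      exact hPne.ne_empty (Set.subset_empty_iff.mp hP)
    -- structure of the generated σ-field
    have key : ∃ B, MeasurableSet B ∧ (symmDiff L B) ∈ I := by
      refine MeasurableSpace.generateFrom_induction _
        (fun s _ => ∃ B, MeasurableSet B ∧ (symmDiff s B) ∈ I) ?_ ?_ ?_ ?_ L hmeas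
      · rintro t (ht | ht) -
        · exact ⟨t, ht, by simpa using hempty⟩
        · exact ⟨∅, MeasurableSet.empty, by
            rwa [show symmDiff t (∅ : Set X) = t by simp [Set.symmDiff_def]]⟩
      · exact ⟨∅, MeasurableSet.empty, by simpa using hempty⟩
      · rintro t - ⟨B, hB, hAB⟩
        exact ⟨Bᶜ, hB.compl, by rwa [compl_symmDiff_compl]⟩
      · intro t ht hf
        have hf' : ∀ n, ∃ B, MeasurableSet B ∧ (symmDiff (t n) B) ∈ I := hf
        choose g hgmeas hgI using hf'
        refine ⟨⋃ n, g n, MeasurableSet.iUnion hgmeas, ?_⟩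
        refine hdown _ (⋃ n, symmDiff (t n) (g n)) ?_ (hunion _ hgI)
        intro x hx
        rw [Set.mem_symmDiff] at hx
        rcases hx with ⟨hx1, hx2⟩ | ⟨hx1, hx2⟩ <;>
        · rw [Set.mem_iUnion] at hx1
          obtain ⟨n, hn⟩ := hx1
          refine Set.mem_iUnion.mpr ⟨n, ?_⟩
          rw [Set.mem_symmDiff]
          first
          | exact Or.inl ⟨hn, fun h => hx2 (Set.mem_iUnion.mpr ⟨n, h⟩)⟩
          | exact Or.inr ⟨hn, fun h => hx2 (Set.mem_iUnion.mpr ⟨n, h⟩)⟩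
    obtain ⟨B, hBmeas, hMI⟩ := key
    set M := symmDiff L B with hM
    have hBL : B \ M ⊆ L := by
      rintro x ⟨hxB, hxM⟩
      by_contra h
      exact hxM (Set.mem_symmDiff.mpr (Or.inr ⟨hxB, h⟩))
    by_cases hB : B ∈ I
    · -- L is covered by B ∪ M ∈ I
      have hLsub : L ⊆ B ∪ M := by
        intro x hx
        by_cases hxB : x ∈ B
        · exact Or.inl hxB
        · exact Or.inr (Set.mem_symmDiff.mpr (Or.inl ⟨hx, hxB⟩))
      have hBM : B ∪ M ∈ I := by
        refine hdown _ (⋃ n : ℕ, if n = 0 then B else M) ?_ ?_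
        · rintro x (hx | hx)
          · exact Set.mem_iUnion.mpr ⟨0, by simpa using hx⟩
          · exact Set.mem_iUnion.mpr ⟨1, by simpa using hx⟩
        · refine hunion _ fun n => ?_
          split <;> assumption
      have := hLuzin (B ∪ M) hBM
      rw [Set.inter_eq_self_of_subset_left hLsub] at this
      exact lt_irrefl _ this
    · -- find a perfect set in I inside L
      obtain ⟨M', hM'meas, hMM', hM'I⟩ := hbase M hMI
      have hBdiff : B \ M' ∉ I := by
        intro h
        refine hB (hdown B ((B \ M') ∪ M') ?_ ?_)
        · intro x hx
          by_cases hxM : x ∈ M'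
          · exact Or.inr hxM
          · exact Or.inl ⟨hx, hxM⟩
        · refine hdown _ (⋃ n : ℕ, if n = 0 then B \ M' else M') ?_ ?_
          · rintro x (hx | hx)
            · exact Set.mem_iUnion.mpr ⟨0, by simpa using hx⟩
            · exact Set.mem_iUnion.mpr ⟨1, by simpa using hx⟩
          · refine hunion _ fun n => ?_
            split <;> assumption
      obtain ⟨P, hPsub, hPperf, hPne, hPI⟩ := htall (B \ M') (hBmeas.diff hM'meas) hBdiff
      have hPL : P ⊆ L := fun x hx =>
        hBL ⟨(hPsub hx).1, fun h => (hPsub hx).2 (hMM' h)⟩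
      have h1 := hLuzin P hPI
      rw [Set.inter_eq_self_of_subset_right hPL] at h1
      have h2 : #(↥L) ≤ 𝔠 := le_trans (Cardinal.mk_set_le L) aux_card_le_continuum
      exact absurd h1 (not_lt.mpr (le_trans h2 (aux_perfect_card hPperf hPne)))
end

section
/- If I has the Weaker Smital Property, then every Borel I-positive set B contains a set A' with A' ∉ I and |A'| = non(I). -/
open Cardinal Pointwise

theorem union_two_mem {I : Set (Set ℝ)}
    (hdown : ∀ A B : Set ℝ, A ⊆ B → B ∈ I → A ∈ I)
    (hunion : ∀ f : ℕ → Set ℝ, (∀ n, f n ∈ I) → (⋃ n, f n) ∈ I)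
    {X Y : Set ℝ} (hX : X ∈ I) (hY : Y ∈ I) : X ∪ Y ∈ I := by
  have h := hunion (fun n => if n = 0 then X else Y) (by
    intro n; split <;> assumption)
  refine hdown _ _ ?_ h
  intro x hx
  rcases hx with hx | hx
  · exact Set.mem_iUnion.2 ⟨0, by simpa using hx⟩
  · exact Set.mem_iUnion.2 ⟨1, by simpa using hx⟩

/-- The Weaker Smital Property implies every Borel I-positive set
contains a witness for non(I). -/
theorem stmt_3 (I : Set (Set ℝ))
    (hdown : ∀ A B : Set ℝ, A ⊆ B → B ∈ I → A ∈ I)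
    (hunion : ∀ f : ℕ → Set ℝ, (∀ n, f n ∈ I) → (⋃ n, f n) ∈ I)
    (hnontriv : (Set.univ : Set ℝ) ∉ I)
    (hsing : ∀ x : ℝ, ({x} : Set ℝ) ∈ I)
    (hbase : ∀ A ∈ I, ∃ B : Set ℝ, MeasurableSet B ∧ A ⊆ B ∧ B ∈ I)
    (hinv : ∀ (x : ℝ) (A : Set ℝ), A ∈ I → (fun a => -a + x) '' A ∈ I)
    (hWSP : ∃ D : Set ℝ, D.Countable ∧ Dense D ∧
      ∀ B : Set ℝ, MeasurableSet B → B ∉ I → (D + B)ᶜ ∈ I) :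
    ∀ B : Set ℝ, MeasurableSet B → B ∉ I →
      ∃ A' ⊆ B, A' ∉ I ∧
        #(↥A') = sInf {c : Cardinal | ∃ A : Set ℝ, A ∉ I ∧ #(↥A) = c} := by
  intro B hBmeas hBI
  set S : Set Cardinal := {c : Cardinal | ∃ A : Set ℝ, A ∉ I ∧ #(↥A) = c} with hS
  have hSne : S.Nonempty := ⟨#(Set.univ : Set ℝ), Set.univ, hnontriv, rfl⟩
  obtain ⟨A, hA, hAcard⟩ := csInf_mem hSne
  obtain ⟨D, hDc, hDd, hW⟩ := hWSP
  have hcompl : (D + B)ᶜ ∈ I := hW B hBmeas hBI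
  -- A ∩ (D + B) ∉ I
  have hAD : A ∩ (D + B) ∉ I := by
    intro h
    apply hA
    refine hdown _ _ ?_ (union_two_mem hdown hunion h hcompl)
    intro x hx
    by_cases hxd : x ∈ D + B
    · exact Or.inl ⟨hx, hxd⟩
    · exact Or.inr hxd
  -- D nonempty
  have hDne : D.Nonempty := hDd.nonempty
  obtain ⟨g, hg⟩ := Set.Countable.exists_eq_range hDc hDne
  -- find n with A ∩ (g n + B) ∉ I
  have hcover : A ∩ (D + B) ⊆ ⋃ n, A ∩ ((fun b => g n + b) '' B) := by
    rintro x ⟨hxA, hxDB⟩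
    rcases Set.mem_add.1 hxDB with ⟨d, hd, b, hb, rfl⟩
    rw [hg] at hd
    obtain ⟨n, rfl⟩ := hd
    exact Set.mem_iUnion.2 ⟨n, hxA, ⟨b, hb, rfl⟩⟩
  have hex : ∃ n, A ∩ ((fun b => g n + b) '' B) ∉ I := by
    by_contra h
    push_neg at h
    exact hAD (hdown _ _ hcover (hunion _ h))
  obtain ⟨n, hn⟩ := hex
  set d := g n
  set C := A ∩ ((fun b => d + b) '' B) with hC
  set A' := (fun a => -d + a) '' C with hA'
  have hsub : A' ⊆ B := by
    rintro x ⟨c, ⟨hcA, ⟨b, hb, rfl⟩⟩, rfl⟩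
    simpa using hb
  have hA'I : A' ∉ I := by
    intro h
    apply hn
    have h1 := hinv 0 _ h
    have h2 := hinv d _ h1
    refine hdown _ _ ?_ h2
    rintro c hc
    exact ⟨-(-d + c) + 0, ⟨-d + c, ⟨c, hc, rfl⟩, rfl⟩, by ring⟩
  have hinj : #(↥A') = #(↥C) := by
    rw [hA']
    exact Cardinal.mk_image_eq (add_right_injective (-d))
  have hle : #(↥A') ≤ sInf S := by
    rw [hinj, ← hAcard]
    exact Cardinal.mk_le_mk_of_subset Set.inter_subset_left
  have hge : sInf S ≤ #(↥A') := csInf_le' ⟨A', hA'I, rfl⟩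
  exact ⟨A', hsub, hA'I, le_antisymm hle hge⟩
end

section
/- If I is ccc and satisfies the Fubini Property, then every Borel I-positive set B contains a set of the form B ∩ (A - x) that is I-positive for some A ∉ I with |A| = non(I) and some x ∈ ℝ; consequently every Borel I-positive set contains a witness for non(I), i.e. a subset A' ∉ I with |A'| = non(I). -/
open Cardinal

section Aux

variable (I : Set (Set ℝ))

lemma aux_empty (hdown : ∀ A B : Set ℝ, A ⊆ B → B ∈ I → A ∈ I)
    (hsing : ∀ x : ℝ, ({x} : Set ℝ) ∈ I) : (∅ : Set ℝ) ∈ I :=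
  hdown ∅ {0} (Set.empty_subset _) (hsing 0)

lemma aux_union2 (hdown : ∀ A B : Set ℝ, A ⊆ B → B ∈ I → A ∈ I)
    (hunion : ∀ f : ℕ → Set ℝ, (∀ n, f n ∈ I) → (⋃ n, f n) ∈ I)
    (X Y : Set ℝ) (hX : X ∈ I) (hY : Y ∈ I) : X ∪ Y ∈ I := by
  have h := hunion (fun n => if n = 0 then X else Y)
    (by intro n; by_cases h : n = 0 <;> simp [h, hX, hY])
  refine hdown _ _ ?_ h
  intro z hz
  rcases hz with hz | hz
  · exact Set.mem_iUnion.2 ⟨0, by simpa using hz⟩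
  · exact Set.mem_iUnion.2 ⟨1, by simpa using hz⟩

lemma aux_sUnion (hdown : ∀ A B : Set ℝ, A ⊆ B → B ∈ I → A ∈ I)
    (hunion : ∀ f : ℕ → Set ℝ, (∀ n, f n ∈ I) → (⋃ n, f n) ∈ I)
    (hsing : ∀ x : ℝ, ({x} : Set ℝ) ∈ I)
    (S : Set (Set ℝ)) (hc : S.Countable) (hS : ∀ X ∈ S, X ∈ I) : ⋃₀ S ∈ I := by
  rcases S.eq_empty_or_nonempty with rfl | hne
  · simpa using aux_empty I hdown hsing
  · obtain ⟨f, rfl⟩ := hc.exists_eq_range hne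
    rw [Set.sUnion_range]
    exact hunion f (fun n => hS _ ⟨n, rfl⟩)

lemma aux_trans (hinv : ∀ (x : ℝ) (A : Set ℝ), A ∈ I → (fun a => -a + x) '' A ∈ I)
    (t : ℝ) (A : Set ℝ) (hA : A ∈ I) : (fun a => a + t) '' A ∈ I := by
  have h := hinv t _ (hinv 0 A hA)
  rw [Set.image_image] at h
  have heq : (fun x : ℝ => -(-x + 0) + t) = (fun a : ℝ => a + t) := by funext a; ring
  rwa [heq] at h

/-- Borel hull modulo I for an arbitrary set, using ccc. -/
lemma aux_hull (hdown : ∀ A B : Set ℝ, A ⊆ B → B ∈ I → A ∈ I)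
    (hunion : ∀ f : ℕ → Set ℝ, (∀ n, f n ∈ I) → (⋃ n, f n) ∈ I)
    (hsing : ∀ x : ℝ, ({x} : Set ℝ) ∈ I)
    (hbase : ∀ A ∈ I, ∃ B : Set ℝ, MeasurableSet B ∧ A ⊆ B ∧ B ∈ I)
    (hccc : ∀ F : Set (Set ℝ), (∀ B ∈ F, MeasurableSet B ∧ B ∉ I) →
      F.PairwiseDisjoint id → F.Countable)
    (A : Set ℝ) :
    ∃ H : Set ℝ, MeasurableSet H ∧ A ⊆ H ∧
      ∀ W : Set ℝ, MeasurableSet W → W ∩ A ∈ I → W ∩ H ∈ I := by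
  classical
  set S : Set (Set (Set ℝ)) :=
    {F | (∀ W ∈ F, MeasurableSet W ∧ W ∉ I ∧ W ∩ A ∈ I) ∧ F.PairwiseDisjoint id} with hS
  obtain ⟨F, hF⟩ := zorn_subset S (by
    intro c hc hchain
    refine ⟨⋃₀ c, ⟨?_, ?_⟩, fun s hs => Set.subset_sUnion_of_mem hs⟩
    · rintro W ⟨F, hFc, hWF⟩
      exact (hc hFc).1 W hWF
    · rintro X ⟨F1, hF1, hX1⟩ Y ⟨F2, hF2, hY2⟩ hne
      rcases hchain.total hF1 hF2 with h | h
      · exact (hc hF2).2 (h hX1) hY2 hne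
      · exact (hc hF1).2 hX1 (h hY2) hne)
  have hFS : F ∈ S := hF.1
  have hcount : F.Countable :=
    hccc F (fun W hW => ⟨(hFS.1 W hW).1, (hFS.1 W hW).2.1⟩) hFS.2
  have hchoice : ∀ W, W ∈ F → ∃ N : Set ℝ, MeasurableSet N ∧ W ∩ A ⊆ N ∧ N ∈ I :=
    fun W hW => hbase _ (hFS.1 W hW).2.2
  choose! g hg1 hg2 hg3 using hchoice
  have hUFm : MeasurableSet (⋃₀ F) :=
    MeasurableSet.sUnion hcount (fun W hW => (hFS.1 W hW).1)
  have hGm : MeasurableSet (⋃₀ (g '' F)) := by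
    refine MeasurableSet.sUnion (hcount.image g) ?_
    rintro _ ⟨W, hW, rfl⟩
    exact hg1 W hW
  refine ⟨(Set.univ \ ⋃₀ F) ∪ ⋃₀ (g '' F),
    (MeasurableSet.univ.diff hUFm).union hGm, ?_, ?_⟩
  · intro a ha
    by_cases h : a ∈ ⋃₀ F
    · obtain ⟨W, hW, haW⟩ := h
      exact Or.inr (Set.mem_sUnion.2 ⟨g W, ⟨W, hW, rfl⟩, hg2 W hW ⟨haW, ha⟩⟩)
    · exact Or.inl ⟨trivial, h⟩
  · intro W hWm hWA
    have hGU : ⋃₀ (g '' F) ∈ I := by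
      refine aux_sUnion I hdown hunion hsing _ (hcount.image g) ?_
      rintro _ ⟨W', hW', rfl⟩
      exact hg3 W' hW'
    have hWdiff : W \ ⋃₀ F ∈ I := by
      by_contra hpos
      have hmem : insert (W \ ⋃₀ F) F ∈ S := by
        constructor
        · intro X hX
          rcases hX with rfl | hX
          · exact ⟨hWm.diff hUFm, hpos,
              hdown ((W \ ⋃₀ F) ∩ A) (W ∩ A) (fun z hz => ⟨hz.1.1, hz.2⟩) hWA⟩
          · exact hFS.1 X hX
        · rw [Set.pairwiseDisjoint_insert]
          refine ⟨hFS.2, fun X hX _ => ?_⟩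
          simp only [id]
          exact Set.disjoint_left.2 fun z hz hzX => hz.2 ⟨X, hX, hzX⟩
      have hsub : insert (W \ ⋃₀ F) F ⊆ F := hF.2 hmem (Set.subset_insert _ _)
      have hin : W \ ⋃₀ F ∈ F := hsub (Set.mem_insert _ _)
      obtain ⟨z, hz⟩ : (W \ ⋃₀ F).Nonempty := by
        rcases (W \ ⋃₀ F).eq_empty_or_nonempty with h | h
        · exact absurd (h ▸ aux_empty I hdown hsing) hpos
        · exact h
      exact hz.2 ⟨_, hin, hz⟩
    refine hdown _ _ ?_ (aux_union2 I hdown hunion _ _ hWdiff hGU)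
    rintro z ⟨hzW, hzH⟩
    rcases hzH with ⟨-, hz⟩ | hz
    · exact Or.inl ⟨hzW, hz⟩
    · exact Or.inr hz

end Aux

/-- ccc + Fubini Property implies every Borel I-positive set contains
an I-positive set of the form B ∩ (A - x) with |A| = non(I); consequently it
contains a witness for non(I). -/
theorem stmt_6 (I : Set (Set ℝ))
    (hdown : ∀ A B : Set ℝ, A ⊆ B → B ∈ I → A ∈ I)
    (hunion : ∀ f : ℕ → Set ℝ, (∀ n, f n ∈ I) → (⋃ n, f n) ∈ I)
    (hnontriv : (Set.univ : Set ℝ) ∉ I)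
    (hsing : ∀ x : ℝ, ({x} : Set ℝ) ∈ I)
    (hbase : ∀ A ∈ I, ∃ B : Set ℝ, MeasurableSet B ∧ A ⊆ B ∧ B ∈ I)
    (hinv : ∀ (x : ℝ) (A : Set ℝ), A ∈ I → (fun a => -a + x) '' A ∈ I)
    (hccc : ∀ F : Set (Set ℝ), (∀ B ∈ F, MeasurableSet B ∧ B ∉ I) →
      F.PairwiseDisjoint id → F.Countable)
    (hFub : ∀ C : Set (ℝ × ℝ), MeasurableSet C →
      {x : ℝ | {y : ℝ | (x, y) ∈ C} ∉ I} ∈ I →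
      {y : ℝ | {x : ℝ | (x, y) ∈ C} ∉ I} ∈ I) :
    ∀ B : Set ℝ, MeasurableSet B → B ∉ I →
      (∃ (A : Set ℝ) (x : ℝ), A ∉ I ∧
          #(↥A) = sInf {c : Cardinal | ∃ A' : Set ℝ, A' ∉ I ∧ #(↥A') = c} ∧
          B ∩ ((fun a => a - x) '' A) ∉ I) ∧
      (∃ A' ⊆ B, A' ∉ I ∧
          #(↥A') = sInf {c : Cardinal | ∃ A : Set ℝ, A ∉ I ∧ #(↥A) = c}) := by
  intro B hB hBpos
  have htrans : ∀ (t : ℝ) (X : Set ℝ), X ∈ I → (fun a => a + t) '' X ∈ I :=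
    aux_trans I hinv
  set κS : Set Cardinal := {c | ∃ A' : Set ℝ, A' ∉ I ∧ #(↥A') = c} with hκS
  have hne : κS.Nonempty := ⟨#(↥(Set.univ : Set ℝ)), Set.univ, hnontriv, rfl⟩
  obtain ⟨A, hApos, hAcard⟩ : ∃ A : Set ℝ, A ∉ I ∧ #(↥A) = sInf κS := by
    obtain ⟨A, hA, hc⟩ := csInf_mem hne
    exact ⟨A, hA, hc⟩
  obtain ⟨H, hHm, hAH, hHull⟩ := aux_hull I hdown hunion hsing hbase hccc A
  have hmain : ∃ x : ℝ, B ∩ ((fun a => a - x) '' A) ∉ I := by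
    by_contra hcon
    push_neg at hcon
    set C : Set (ℝ × ℝ) := {p | p.2 ∈ B ∧ p.1 + p.2 ∈ H} with hC
    have hCm : MeasurableSet C := by
      have h1 : MeasurableSet {p : ℝ × ℝ | p.2 ∈ B} := measurable_snd hB
      have h2 : MeasurableSet {p : ℝ × ℝ | p.1 + p.2 ∈ H} :=
        (measurable_fst.add measurable_snd) hHm
      exact h1.inter h2
    have hsec : ∀ x : ℝ, {y : ℝ | (x, y) ∈ C} ∈ I := by
      intro x
      set W : Set ℝ := (fun a => a - x) ⁻¹' B with hWdef
      have hWm : MeasurableSet W := (measurable_id.sub_const x) hB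
      have hWA : W ∩ A ∈ I := by
        have himg : (fun a => a + x) '' (B ∩ ((fun a => a - x) '' A)) = W ∩ A := by
          ext z
          constructor
          · rintro ⟨b, ⟨hbB, a, haA, rfl⟩, rfl⟩
            constructor
            · show a - x + x - x ∈ B
              have h : a - x + x - x = a - x := by ring
              rw [h]; exact hbB
            · show a - x + x ∈ A
              have h : a - x + x = a := by ring
              rw [h]; exact haA
          · rintro ⟨hz1, hz2⟩
            refine ⟨z - x, ⟨hz1, z, hz2, rfl⟩, ?_⟩
            show z - x + x = z
            ring
        rw [← himg]
        exact htrans x _ (hcon x)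
      have hWH : W ∩ H ∈ I := hHull W hWm hWA
      have heq : {y : ℝ | (x, y) ∈ C} = (fun z => z + (-x)) '' (W ∩ H) := by
        ext y
        simp only [hC, Set.mem_setOf_eq, Set.mem_image]
        constructor
        · rintro ⟨hyB, hyH⟩
          refine ⟨x + y, ⟨?_, hyH⟩, by ring⟩
          show x + y - x ∈ B
          have h : x + y - x = y := by ring
          rw [h]; exact hyB
        · rintro ⟨z, ⟨hz1, hz2⟩, rfl⟩
          constructor
          · show z + -x ∈ B
            have h : z + -x = z - x := by ring
            rw [h]; exact hz1
          · show x + (z + -x) ∈ H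
            have h : x + (z + -x) = z := by ring
            rw [h]; exact hz2
      rw [heq]
      exact htrans (-x) _ hWH
    have hxset : {x : ℝ | {y : ℝ | (x, y) ∈ C} ∉ I} ∈ I := by
      have hempty : {x : ℝ | {y : ℝ | (x, y) ∈ C} ∉ I} = ∅ := by
        ext x
        simp [hsec x]
      rw [hempty]
      exact aux_empty I hdown hsing
    have hyset := hFub C hCm hxset
    refine hBpos (hdown _ _ ?_ hyset)
    intro y hyB
    simp only [Set.mem_setOf_eq]
    intro hyI
    have hsub : (fun a => a + (-y)) '' A ⊆ {x : ℝ | (x, y) ∈ C} := by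
      rintro _ ⟨a, haA, rfl⟩
      refine ⟨hyB, ?_⟩
      show a + -y + y ∈ H
      have h : a + -y + y = a := by ring
      rw [h]; exact hAH haA
    have hA_I : (fun a => a + y) '' ((fun a => a + (-y)) '' A) ∈ I :=
      htrans y _ (hdown _ _ hsub hyI)
    rw [Set.image_image] at hA_I
    have h : (fun a : ℝ => a + -y + y) = fun a : ℝ => a := by funext a; ring
    rw [h, Set.image_id'] at hA_I
    exact hApos hA_I
  obtain ⟨x, hx⟩ := hmain
  constructor
  · exact ⟨A, x, hApos, hAcard, hx⟩
  · refine ⟨B ∩ ((fun a => a - x) '' A), Set.inter_subset_left, hx, ?_⟩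
    refine le_antisymm ?_ (csInf_le' ⟨_, hx, rfl⟩)
    calc #(↥(B ∩ ((fun a => a - x) '' A)))
        ≤ #(↥((fun a => a - x) '' A)) :=
          Cardinal.mk_le_mk_of_subset Set.inter_subset_right
      _ ≤ #(↥A) := Cardinal.mk_image_le
      _ = sInf κS := hAcard
end

section
/- Every perfect set P ⊆ ℝⁿ contains a perfect subset Q such that for every x ≠ 0, the intersection Q ∩ (Q + x) contains at most one point. -/
open Set Filter

set_option linter.unusedSectionVars false

lemma my_acc_infinite {X : Type*} [TopologicalSpace X] [T1Space X] {x : X} {C : Set X}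
    (h : AccPt x (𝓟 C)) {U : Set X} (hU : U ∈ nhds x) : (U ∩ C).Infinite := by
  intro hfin
  have hF : ((U ∩ C) \ {x}).Finite := hfin.diff
  have hcl : IsClosed ((U ∩ C) \ {x}) := hF.isClosed
  have hmem : (((U ∩ C) \ {x})ᶜ : Set X) ∈ nhds x := hcl.isOpen_compl.mem_nhds (by simp)
  rw [accPt_iff_nhds] at h
  obtain ⟨y, ⟨hyU, hyc⟩, hyx⟩ := h (U ∩ ((U ∩ C) \ {x})ᶜ) (Filter.inter_mem hU hmem)
  exact (hyU.2 ⟨⟨hyU.1, hyc⟩, hyx⟩)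

lemma my_exists_pos_le {ι : Type*} [Fintype ι] (g : ι → ℝ) (h : ∀ i, 0 < g i) :
    ∃ ε : ℝ, 0 < ε ∧ ∀ i, ε ≤ g i := by
  rcases isEmpty_or_nonempty ι with hι | hι
  · exact ⟨1, one_pos, fun i => (IsEmpty.false i).elim⟩
  · refine ⟨Finset.univ.inf' Finset.univ_nonempty g, ?_, fun i => Finset.inf'_le g (Finset.mem_univ i)⟩
    rw [Finset.lt_inf'_iff]
    exact fun i _ => h i


lemma my_half_eq {E : Type*} [AddCommGroup E] [Module ℝ E] {x u v : E} (h : x + x = u + v) :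
    x = (2⁻¹ : ℝ) • (u + v) := by
  have h2 : (2 : ℝ) • x = u + v := by rw [two_smul, h]
  rw [← h2, smul_smul]; norm_num

lemma my_sidon_select {E : Type*} [AddCommGroup E] [Module ℝ E]
    {ι : Type*} [DecidableEq ι] (S : ι → Set E) (hS : ∀ i, (S i).Infinite) (t : Finset ι) :
    ∃ q : ι → E, (∀ i ∈ t, q i ∈ S i) ∧
      ∀ i ∈ t, ∀ j ∈ t, ∀ k ∈ t, ∀ l ∈ t,
        q i - q j = q k - q l → (i = j ∧ k = l) ∨ (i = k ∧ j = l) := by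
  induction t using Finset.induction_on with
  | empty => exact ⟨fun _ => 0, by simp, by simp⟩
  | @insert a t ha ih =>
    obtain ⟨q, hq, hsid⟩ := ih
    set F : Set E := ((fun p : ι × ι × ι => q p.1 + q p.2.1 - q p.2.2) ''
        ((t : Set ι) ×ˢ (t : Set ι) ×ˢ (t : Set ι))) ∪
      ((fun p : ι × ι => (2⁻¹ : ℝ) • (q p.1 + q p.2)) '' ((t : Set ι) ×ˢ (t : Set ι))) with hFdef
    have hFfin : F.Finite :=
      Set.Finite.union
        (Set.Finite.image _ (t.finite_toSet.prod (t.finite_toSet.prod t.finite_toSet)))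
        (Set.Finite.image _ (t.finite_toSet.prod t.finite_toSet))
    obtain ⟨x, hxSF⟩ := ((hS a).diff hFfin).nonempty
    have hxS : x ∈ S a := hxSF.1
    have hx1 : ∀ i ∈ t, ∀ j ∈ t, ∀ k ∈ t, x ≠ q i + q j - q k := by
      intro i hi j hj k hk e
      exact hxSF.2 (Or.inl ⟨(i, j, k), ⟨hi, hj, hk⟩, e.symm⟩)
    have hx2 : ∀ i ∈ t, ∀ j ∈ t, x ≠ (2⁻¹ : ℝ) • (q i + q j) := by
      intro i hi j hj e
      exact hxSF.2 (Or.inr ⟨(i, j), ⟨hi, hj⟩, e.symm⟩)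
    have hx3 : ∀ i ∈ t, x ≠ q i := by
      intro i hi
      have := hx1 i hi i hi i hi; simpa using this
    have hinj : ∀ i ∈ t, ∀ j ∈ t, q i = q j → i = j := by
      intro i hi j hj e
      rcases hsid i hi j hj i hi i hi (by rw [e]) with ⟨h1, _⟩ | ⟨_, h2⟩
      · exact h1
      · exact h2.symm
    have upd : ∀ m ∈ t, Function.update q a x m = q m := fun m hm =>
      Function.update_of_ne (fun (e : m = a) => ha (e ▸ hm)) _ _
    have upda : Function.update q a x a = x := Function.update_self a x q
    refine ⟨Function.update q a x, ?_, ?_⟩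
    · intro i hi
      rcases Finset.mem_insert.1 hi with rfl | hi'
      · rwa [upda]
      · rw [upd i hi']; exact hq i hi'
    · intro i hi j hj k hk l hl h
      rcases Finset.mem_insert.1 hi with hia | hit <;>
        rcases Finset.mem_insert.1 hj with hja | hjt <;>
          rcases Finset.mem_insert.1 hk with hka | hkt <;>
            rcases Finset.mem_insert.1 hl with hla | hlt
      -- case (a,a,a,a)
      · exact Or.inl ⟨hia.trans hja.symm, hka.trans hla.symm⟩
      -- (a,a,a,t)
      · subst hia; subst hja; subst hka
        rw [upda, upd l hlt, sub_self, eq_comm, sub_eq_zero] at h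
        exact absurd h (hx3 l hlt)
      -- (a,a,t,a)
      · subst hia; subst hja; subst hla
        rw [upda, upd k hkt, sub_self, eq_comm] at h
        rw [sub_eq_zero] at h
        exact absurd h.symm (hx3 k hkt)
      -- (a,a,t,t)
      · subst hia; subst hja
        rw [upd k hkt, upd l hlt, sub_self, eq_comm, sub_eq_zero] at h
        exact Or.inl ⟨rfl, hinj k hkt l hlt h⟩
      -- (a,t,a,a)
      · subst hia; subst hka; subst hla
        rw [upda, upd j hjt, sub_self, sub_eq_zero] at h
        exact absurd h (hx3 j hjt)
      -- (a,t,a,t)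
      · subst hia; subst hka
        rw [upda, upd j hjt, upd l hlt, sub_right_inj] at h
        exact Or.inr ⟨rfl, hinj j hjt l hlt h⟩
      -- (a,t,t,a)
      · subst hia; subst hla
        rw [upda, upd j hjt, upd k hkt] at h
        have h2 : x + x = q k + q j := sub_eq_sub_iff_add_eq_add.1 h
        have : x = (2⁻¹ : ℝ) • (q k + q j) := my_half_eq h2
        exact absurd this (hx2 k hkt j hjt)
      -- (a,t,t,t)
      · subst hia
        rw [upda, upd j hjt, upd k hkt, upd l hlt] at h
        have h2 : x + q l = q k + q j := sub_eq_sub_iff_add_eq_add.1 h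
        have : x = q k + q j - q l := eq_sub_of_add_eq h2
        exact absurd this (hx1 k hkt j hjt l hlt)
      -- (t,a,a,a)
      · subst hja; subst hka; subst hla
        rw [upda, upd i hit, sub_self, sub_eq_zero] at h
        exact absurd h.symm (hx3 i hit)
      -- (t,a,a,t)
      · subst hja; subst hka
        rw [upda, upd i hit, upd l hlt] at h
        have h2 : q i + q l = x + x := sub_eq_sub_iff_add_eq_add.1 h
        have : x = (2⁻¹ : ℝ) • (q i + q l) := my_half_eq h2.symm
        exact absurd this (hx2 i hit l hlt)
      -- (t,a,t,a)
      · subst hja; subst hla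
        rw [upda, upd i hit, upd k hkt, sub_left_inj] at h
        exact Or.inr ⟨hinj i hit k hkt h, rfl⟩
      -- (t,a,t,t)
      · subst hja
        rw [upda, upd i hit, upd k hkt, upd l hlt] at h
        have h2 : q i + q l = q k + x := sub_eq_sub_iff_add_eq_add.1 h
        have h3 : x + q k = q i + q l := by rw [h2]; abel
        have : x = q i + q l - q k := eq_sub_of_add_eq h3
        exact absurd this (hx1 i hit l hlt k hkt)
      -- (t,t,a,a)
      · subst hka; subst hla
        rw [upd i hit, upd j hjt, sub_self, sub_eq_zero] at h
        exact Or.inl ⟨hinj i hit j hjt h, rfl⟩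
      -- (t,t,a,t)
      · subst hka
        rw [upda, upd i hit, upd j hjt, upd l hlt] at h
        have h2 : q i + q l = x + q j := sub_eq_sub_iff_add_eq_add.1 h
        have : x = q i + q l - q j := eq_sub_of_add_eq h2.symm
        exact absurd this (hx1 i hit l hlt j hjt)
      -- (t,t,t,a)
      · subst hla
        rw [upda, upd i hit, upd j hjt, upd k hkt] at h
        have h2 : q i + x = q k + q j := sub_eq_sub_iff_add_eq_add.1 h
        have h3 : x + q i = q k + q j := by rw [← h2]; abel
        have : x = q k + q j - q i := eq_sub_of_add_eq h3
        exact absurd this (hx1 k hkt j hjt i hit)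
      -- (t,t,t,t)
      · rw [upd i hit, upd j hjt, upd k hkt, upd l hlt] at h
        exact hsid i hit j hjt k hkt l hlt h



section Stage
set_option linter.unusedSectionVars false
variable {E : Type*} [NormedAddCommGroup E] [NormedSpace ℝ E]

def myInv (P : Set E) {k : ℕ} (c : (Fin k → Bool) → E) (ρ : ℝ) : Prop :=
  (∀ s, c s ∈ P) ∧ 0 < ρ ∧
    ∀ s t u v : Fin k → Bool, ¬((s = t ∧ u = v) ∨ (s = u ∧ t = v)) →
      17 * ρ ≤ ‖c s - c t - (c u - c v)‖

lemma my_stage_zero {P : Set E} (hne : P.Nonempty) :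
    ∃ (c : (Fin 0 → Bool) → E) (ρ : ℝ), myInv P c ρ := by
  refine ⟨fun _ => hne.choose, 1, fun _ => hne.choose_spec, one_pos, ?_⟩
  intro s t u v hn
  exact absurd (Or.inl ⟨Subsingleton.elim s t, Subsingleton.elim u v⟩) hn

lemma my_stage_succ {P : Set E} (hP : Perfect P) {k : ℕ} {c : (Fin k → Bool) → E} {ρ : ℝ}
    (h : myInv P c ρ) :
    ∃ (c' : (Fin (k + 1) → Bool) → E) (ρ' : ℝ), myInv P c' ρ' ∧
      (∀ s : Fin (k + 1) → Bool, ‖c' s - c (s ∘ Fin.castSucc)‖ ≤ ρ) ∧ ρ' ≤ ρ / 2 := by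
  obtain ⟨hmem, hρ, _⟩ := h
  set S : (Fin (k + 1) → Bool) → Set E :=
    fun s => P ∩ Metric.ball (c (s ∘ Fin.castSucc)) ρ with hS
  have hSinf : ∀ s, (S s).Infinite := by
    intro s
    have hacc := hP.acc _ (hmem (s ∘ Fin.castSucc))
    have h2 := my_acc_infinite hacc (Metric.ball_mem_nhds _ hρ)
    simpa [hS, Set.inter_comm] using h2
  obtain ⟨q, hq, hsid⟩ := my_sidon_select S hSinf Finset.univ
  have hq' : ∀ s, q s ∈ S s := fun s => hq s (Finset.mem_univ s)
  have hsid' : ∀ s t u v : Fin (k + 1) → Bool, q s - q t = q u - q v →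
      (s = t ∧ u = v) ∨ (s = u ∧ t = v) := fun s t u v hh =>
    hsid s (Finset.mem_univ s) t (Finset.mem_univ t) u (Finset.mem_univ u) v (Finset.mem_univ v) hh
  set T := {p : (Fin (k + 1) → Bool) × (Fin (k + 1) → Bool) × (Fin (k + 1) → Bool) ×
      (Fin (k + 1) → Bool) //
      ¬((p.1 = p.2.1 ∧ p.2.2.1 = p.2.2.2) ∨ (p.1 = p.2.2.1 ∧ p.2.1 = p.2.2.2))} with hT
  have gpos : ∀ p : T, 0 < ‖q p.1.1 - q p.1.2.1 - (q p.1.2.2.1 - q p.1.2.2.2)‖ := by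
    intro p
    rw [norm_pos_iff]
    intro hz
    rw [sub_eq_zero] at hz
    exact p.2 (hsid' _ _ _ _ hz)
  obtain ⟨ε, hε, hεle⟩ := my_exists_pos_le
    (fun p : T => ‖q p.1.1 - q p.1.2.1 - (q p.1.2.2.1 - q p.1.2.2.2)‖) gpos
  refine ⟨q, min (ρ / 2) (ε / 17), ⟨fun s => (hq' s).1, lt_min (half_pos hρ) (by positivity), ?_⟩,
    ?_, min_le_left _ _⟩
  · intro s t u v hn
    calc 17 * min (ρ / 2) (ε / 17) ≤ 17 * (ε / 17) := by
          have := min_le_right (ρ / 2) (ε / 17); nlinarith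
      _ = ε := by ring
      _ ≤ _ := hεle ⟨(s, t, u, v), hn⟩
  · intro s
    have := (hq' s).2
    rw [Metric.mem_ball, dist_eq_norm] at this
    exact this.le





variable (P : Set E) (hP : Perfect P) (hne : P.Nonempty)

noncomputable def myApprox : ∀ k : ℕ, {p : ((Fin k → Bool) → E) × ℝ // myInv P p.1 p.2}
  | 0 => ⟨⟨(my_stage_zero hne).choose, (my_stage_zero hne).choose_spec.choose⟩,
      (my_stage_zero hne).choose_spec.choose_spec⟩
  | (k + 1) =>
    let prev := myApprox k
    let h := my_stage_succ hP prev.2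
    ⟨⟨h.choose, h.choose_spec.choose⟩, h.choose_spec.choose_spec.1⟩

noncomputable def myC (k : ℕ) : (Fin k → Bool) → E := (myApprox P hP hne k).1.1
noncomputable def myR (k : ℕ) : ℝ := (myApprox P hP hne k).1.2

lemma myC_mem (k : ℕ) (s : Fin k → Bool) : myC P hP hne k s ∈ P :=
  (myApprox P hP hne k).2.1 s

lemma myR_pos (k : ℕ) : 0 < myR P hP hne k := (myApprox P hP hne k).2.2.1

lemma mySep (k : ℕ) (s t u v : Fin k → Bool)
    (h : ¬((s = t ∧ u = v) ∨ (s = u ∧ t = v))) :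
    17 * myR P hP hne k ≤ ‖myC P hP hne k s - myC P hP hne k t -
      (myC P hP hne k u - myC P hP hne k v)‖ :=
  (myApprox P hP hne k).2.2.2 s t u v h

lemma myLink (k : ℕ) :
    (∀ s : Fin (k + 1) → Bool,
      ‖myC P hP hne (k + 1) s - myC P hP hne k (s ∘ Fin.castSucc)‖ ≤ myR P hP hne k) ∧
      myR P hP hne (k + 1) ≤ myR P hP hne k / 2 := by
  have h := (my_stage_succ hP (myApprox P hP hne k).2).choose_spec.choose_spec.2
  exact h
end Stage

set_option linter.unusedSectionVars false

section Limits
variable {E : Type*} [NormedAddCommGroup E] [NormedSpace ℝ E] [CompleteSpace E]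
variable (P : Set E) (hP : Perfect P) (hne : P.Nonempty)

lemma myR_decay (k j : ℕ) : myR P hP hne (k + j) ≤ myR P hP hne k / 2 ^ j := by
  induction j with
  | zero => simp
  | succ j ih =>
    have h := (myLink P hP hne (k + j)).2
    calc myR P hP hne (k + (j + 1)) = myR P hP hne ((k + j) + 1) := by ring_nf
      _ ≤ myR P hP hne (k + j) / 2 := h
      _ ≤ (myR P hP hne k / 2 ^ j) / 2 := by linarith
      _ = myR P hP hne k / 2 ^ (j + 1) := by ring

lemma myR_tendsto : Tendsto (myR P hP hne) atTop (nhds 0) := by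
  apply squeeze_zero (fun k => (myR_pos P hP hne k).le)
    (fun k => by simpa [div_eq_mul_inv, ← inv_pow] using myR_decay P hP hne 0 k)
  have h := tendsto_pow_atTop_nhds_zero_of_lt_one (by norm_num : (0:ℝ) ≤ 2⁻¹) (by norm_num)
  simpa using (h.const_mul (myR P hP hne 0))

noncomputable def myA (σ : ℕ → Bool) (k : ℕ) : E := myC P hP hne k (fun i => σ i)

lemma myA_step (σ : ℕ → Bool) (k : ℕ) :
    ‖myA P hP hne σ (k + 1) - myA P hP hne σ k‖ ≤ myR P hP hne k := by
  have h := (myLink P hP hne k).1 (fun i : Fin (k + 1) => σ i)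
  have e : (fun i : Fin (k + 1) => σ i) ∘ Fin.castSucc = fun i : Fin k => σ i := by
    funext i; simp [Fin.coe_castSucc]
  rw [e] at h
  exact h

lemma myA_tail (σ : ℕ → Bool) (k j : ℕ) :
    ‖myA P hP hne σ (k + j) - myA P hP hne σ k‖ ≤
      2 * myR P hP hne k - 2 * myR P hP hne (k + j) := by
  induction j with
  | zero => simp
  | succ j ih =>
    have h1 := myA_step P hP hne σ (k + j)
    have h2 := (myLink P hP hne (k + j)).2
    have h3 : ‖myA P hP hne σ (k + (j + 1)) - myA P hP hne σ k‖ ≤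
        ‖myA P hP hne σ ((k + j) + 1) - myA P hP hne σ (k + j)‖ +
        ‖myA P hP hne σ (k + j) - myA P hP hne σ k‖ := by
      have : k + (j + 1) = (k + j) + 1 := by ring
      rw [this]
      exact norm_sub_le_norm_sub_add_norm_sub _ _ _
    have : myR P hP hne (k + (j + 1)) = myR P hP hne ((k + j) + 1) := by ring_nf
    rw [this]
    linarith

lemma myA_cauchy (σ : ℕ → Bool) : CauchySeq (myA P hP hne σ) := by
  apply cauchySeq_of_le_geometric (1 / 2) (myR P hP hne 0) (by norm_num)
  intro k
  rw [dist_eq_norm, norm_sub_rev]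
  calc ‖myA P hP hne σ (k + 1) - myA P hP hne σ k‖ ≤ myR P hP hne k := myA_step P hP hne σ k
    _ ≤ myR P hP hne 0 / 2 ^ k := by simpa using myR_decay P hP hne 0 k
    _ = myR P hP hne 0 * (1 / 2) ^ k := by rw [div_pow, one_pow]; ring

noncomputable def myF (σ : ℕ → Bool) : E :=
  (cauchySeq_tendsto_of_complete (myA_cauchy P hP hne σ)).choose

lemma myF_tendsto (σ : ℕ → Bool) :
    Tendsto (myA P hP hne σ) atTop (nhds (myF P hP hne σ)) :=
  (cauchySeq_tendsto_of_complete (myA_cauchy P hP hne σ)).choose_spec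

lemma myF_dist (σ : ℕ → Bool) (k : ℕ) :
    ‖myF P hP hne σ - myA P hP hne σ k‖ ≤ 2 * myR P hP hne k := by
  have h : Tendsto (fun m => ‖myA P hP hne σ m - myA P hP hne σ k‖) atTop
      (nhds ‖myF P hP hne σ - myA P hP hne σ k‖) :=
    ((myF_tendsto P hP hne σ).sub_const _).norm
  apply le_of_tendsto h
  filter_upwards [eventually_ge_atTop k] with m hm
  obtain ⟨j, rfl⟩ := Nat.exists_eq_add_of_le hm
  have := myA_tail P hP hne σ k j
  have := myR_pos P hP hne (k + j)
  linarith

lemma myF_mem (σ : ℕ → Bool) : myF P hP hne σ ∈ P :=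
  hP.closed.mem_of_tendsto (myF_tendsto P hP hne σ)
    (Eventually.of_forall fun k => myC_mem P hP hne k _)

lemma myF_close {σ τ : ℕ → Bool} (k : ℕ) (h : ∀ i : Fin k, σ i = τ i) :
    ‖myF P hP hne σ - myF P hP hne τ‖ ≤ 4 * myR P hP hne k := by
  have e : myA P hP hne σ k = myA P hP hne τ k := by
    unfold myA; congr 1; funext i; rw [h i]
  have h1 := myF_dist P hP hne σ k
  have h2 := myF_dist P hP hne τ k
  have h3 : ‖myF P hP hne σ - myF P hP hne τ‖ ≤
      ‖myF P hP hne σ - myA P hP hne σ k‖ + ‖myF P hP hne τ - myA P hP hne τ k‖ := by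
    rw [e]
    have := norm_sub_le_norm_sub_add_norm_sub (myF P hP hne σ) (myA P hP hne τ k)
      (myF P hP hne τ)
    rw [norm_sub_rev (myA P hP hne τ k) (myF P hP hne τ)] at this
    exact this
  linarith

lemma myC_far (k : ℕ) {s t : Fin k → Bool} (h : s ≠ t) :
    17 * myR P hP hne k ≤ ‖myC P hP hne k s - myC P hP hne k t‖ := by
  have := mySep P hP hne k s t s s (by
    rintro (⟨h1, -⟩ | ⟨-, h2⟩)
    · exact h h1
    · exact h h2.symm)
  simpa using this

lemma myF_far {σ τ : ℕ → Bool} (k : ℕ)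
    (h : (fun i : Fin k => σ i) ≠ fun i : Fin k => τ i) :
    13 * myR P hP hne k ≤ ‖myF P hP hne σ - myF P hP hne τ‖ := by
  have h0 := myC_far P hP hne k h
  have h1 := myF_dist P hP hne σ k
  have h2 := myF_dist P hP hne τ k
  have h3 : ‖myC P hP hne k (fun i : Fin k => σ i) - myC P hP hne k (fun i : Fin k => τ i)‖ ≤
      ‖myC P hP hne k (fun i : Fin k => σ i) - myF P hP hne σ‖ +
      ‖myF P hP hne σ - myF P hP hne τ‖ +
      ‖myF P hP hne τ - myC P hP hne k (fun i : Fin k => τ i)‖ := by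
    have := dist_triangle4 (myC P hP hne k (fun i : Fin k => σ i)) (myF P hP hne σ)
      (myF P hP hne τ) (myC P hP hne k (fun i : Fin k => τ i))
    simpa [dist_eq_norm] using this
  rw [norm_sub_rev (myC P hP hne k (fun i : Fin k => σ i)) (myF P hP hne σ)] at h3
  have h4 : ‖myF P hP hne τ - myC P hP hne k (fun i : Fin k => τ i)‖ ≤ 2 * myR P hP hne k := h2
  have h5 : ‖myF P hP hne σ - myC P hP hne k (fun i : Fin k => σ i)‖ ≤ 2 * myR P hP hne k := h1
  linarith

lemma myF_inj : Function.Injective (myF P hP hne) := by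
  intro σ τ h
  by_contra hne'
  obtain ⟨i, hi⟩ : ∃ i, σ i ≠ τ i := by
    by_contra hc; push_neg at hc; exact hne' (funext hc)
  have hst : (fun j : Fin (i + 1) => σ j) ≠ fun j : Fin (i + 1) => τ j := by
    intro e
    exact hi (congrFun e ⟨i, Nat.lt_succ_self i⟩)
  have := myF_far P hP hne (i + 1) hst
  rw [h, sub_self, norm_zero] at this
  have := myR_pos P hP hne (i + 1)
  linarith
end Limits

section Final
variable {E : Type*} [NormedAddCommGroup E] [NormedSpace ℝ E] [CompleteSpace E]
variable (P : Set E) (hP : Perfect P) (hne : P.Nonempty)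

lemma myF_cont : Continuous (myF P hP hne) := by
  rw [continuous_iff_continuousAt]
  intro σ
  rw [ContinuousAt, Metric.tendsto_nhds]
  intro ε hε
  obtain ⟨k, hk⟩ := ((myR_tendsto P hP hne).eventually
    (gt_mem_nhds (show (0:ℝ) < ε / 5 by linarith))).exists
  have hV : IsOpen {τ : ℕ → Bool | ∀ i : Fin k, τ i = σ i} := by
    have : {τ : ℕ → Bool | ∀ i : Fin k, τ i = σ i} =
        ⋂ i : Fin k, (fun τ : ℕ → Bool => τ (i : ℕ)) ⁻¹' {σ (i : ℕ)} := by
      ext τ; simp [Set.mem_iInter]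
    rw [this]
    exact isOpen_iInter_of_finite fun i =>
      (continuous_apply ((i : ℕ))).isOpen_preimage _ (isOpen_discrete _)
  filter_upwards [hV.mem_nhds (fun i => rfl)] with τ hτ
  have := myF_close P hP hne (σ := τ) (τ := σ) k hτ
  rw [dist_eq_norm]
  calc ‖myF P hP hne τ - myF P hP hne σ‖ ≤ 4 * myR P hP hne k := this
    _ < ε := by linarith

lemma myF_key {σ τ σ' τ' : ℕ → Bool}
    (hd : myF P hP hne σ - myF P hP hne τ = myF P hP hne σ' - myF P hP hne τ')
    (hn : myF P hP hne σ ≠ myF P hP hne τ) : myF P hP hne σ = myF P hP hne σ' := by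
  obtain ⟨i, hi⟩ : ∃ i, σ i ≠ τ i := by
    by_contra hc; push_neg at hc
    exact hn (congrArg _ (funext hc))
  have hlev : ∀ k, i < k → (fun j : Fin k => σ j) = fun j : Fin k => σ' j := by
    intro k hk
    by_contra hcon
    have hst : (fun j : Fin k => σ j) ≠ fun j : Fin k => τ j := by
      intro e; exact hi (congrFun e ⟨i, hk⟩)
    have hquad := mySep P hP hne k (fun j : Fin k => σ j) (fun j : Fin k => τ j)
      (fun j : Fin k => σ' j) (fun j : Fin k => τ' j) (by
        rintro (⟨h1, -⟩ | ⟨h2, -⟩)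
        · exact hst h1
        · exact hcon h2)
    have b1 := myF_dist P hP hne σ k
    have b2 := myF_dist P hP hne τ k
    have b3 := myF_dist P hP hne σ' k
    have b4 := myF_dist P hP hne τ' k
    rw [show myA P hP hne σ k = myC P hP hne k (fun j : Fin k => σ j) from rfl] at b1
    rw [show myA P hP hne τ k = myC P hP hne k (fun j : Fin k => τ j) from rfl] at b2
    rw [show myA P hP hne σ' k = myC P hP hne k (fun j : Fin k => σ' j) from rfl] at b3
    rw [show myA P hP hne τ' k = myC P hP hne k (fun j : Fin k => τ' j) from rfl] at b4
    have e : myC P hP hne k (fun j : Fin k => σ j) - myC P hP hne k (fun j : Fin k => τ j) -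
        (myC P hP hne k (fun j : Fin k => σ' j) - myC P hP hne k (fun j : Fin k => τ' j)) =
        -((myF P hP hne σ - myC P hP hne k (fun j : Fin k => σ j)) -
          (myF P hP hne τ - myC P hP hne k (fun j : Fin k => τ j))) +
        ((myF P hP hne σ' - myC P hP hne k (fun j : Fin k => σ' j)) -
          (myF P hP hne τ' - myC P hP hne k (fun j : Fin k => τ' j))) +
        ((myF P hP hne σ - myF P hP hne τ) - (myF P hP hne σ' - myF P hP hne τ')) := by
      abel
    rw [hd, sub_self, add_zero] at e
    rw [e] at hquad
    have n1 : ‖-((myF P hP hne σ - myC P hP hne k (fun j : Fin k => σ j)) -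
          (myF P hP hne τ - myC P hP hne k (fun j : Fin k => τ j))) +
        ((myF P hP hne σ' - myC P hP hne k (fun j : Fin k => σ' j)) -
          (myF P hP hne τ' - myC P hP hne k (fun j : Fin k => τ' j)))‖ ≤
        ‖(myF P hP hne σ - myC P hP hne k (fun j : Fin k => σ j)) -
          (myF P hP hne τ - myC P hP hne k (fun j : Fin k => τ j))‖ +
        ‖(myF P hP hne σ' - myC P hP hne k (fun j : Fin k => σ' j)) -
          (myF P hP hne τ' - myC P hP hne k (fun j : Fin k => τ' j))‖ := by
      calc _ ≤ ‖-((myF P hP hne σ - myC P hP hne k (fun j : Fin k => σ j)) -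
          (myF P hP hne τ - myC P hP hne k (fun j : Fin k => τ j)))‖ +
          ‖(myF P hP hne σ' - myC P hP hne k (fun j : Fin k => σ' j)) -
          (myF P hP hne τ' - myC P hP hne k (fun j : Fin k => τ' j))‖ := norm_add_le _ _
        _ = _ := by rw [norm_neg]
    have n2 : ‖(myF P hP hne σ - myC P hP hne k (fun j : Fin k => σ j)) -
          (myF P hP hne τ - myC P hP hne k (fun j : Fin k => τ j))‖ ≤
        ‖myF P hP hne σ - myC P hP hne k (fun j : Fin k => σ j)‖ +
        ‖myF P hP hne τ - myC P hP hne k (fun j : Fin k => τ j)‖ := norm_sub_le _ _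
    have n3 : ‖(myF P hP hne σ' - myC P hP hne k (fun j : Fin k => σ' j)) -
          (myF P hP hne τ' - myC P hP hne k (fun j : Fin k => τ' j))‖ ≤
        ‖myF P hP hne σ' - myC P hP hne k (fun j : Fin k => σ' j)‖ +
        ‖myF P hP hne τ' - myC P hP hne k (fun j : Fin k => τ' j)‖ := norm_sub_le _ _
    have hρ := myR_pos P hP hne k
    linarith
  have hσσ' : σ = σ' := by
    funext j
    have h1 := hlev (max (i + 1) (j + 1))
      (lt_of_lt_of_le (Nat.lt_succ_self i) (le_max_left _ _))
    exact congrFun h1 ⟨j, lt_of_lt_of_le (Nat.lt_succ_self j) (le_max_right _ _)⟩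
  rw [hσσ']

include hP hne in
theorem my_main : ∃ Q ⊆ P, Perfect Q ∧ Q.Nonempty ∧
    ∀ x : E, x ≠ 0 → (Q ∩ ((fun q => q + x) '' Q)).Subsingleton := by
  refine ⟨Set.range (myF P hP hne), ?_, ⟨?_, ?_⟩, ?_, ?_⟩
  · rintro _ ⟨σ, rfl⟩; exact myF_mem P hP hne σ
  · exact (isCompact_range (myF_cont P hP hne)).isClosed
  · rintro _ ⟨σ, rfl⟩
    rw [accPt_iff_nhds]
    intro U hU
    obtain ⟨ε, hε, hball⟩ := Metric.mem_nhds_iff.1 hU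
    obtain ⟨k, hk⟩ := ((myR_tendsto P hP hne).eventually
      (gt_mem_nhds (show (0:ℝ) < ε / 5 by linarith))).exists
    set τ : ℕ → Bool := fun i => if i = k then !σ i else σ i with hτdef
    have hagree : ∀ i : Fin k, σ i = τ i := by
      intro i
      simp [hτdef, (Fin.is_lt i).ne]
    have hτne : τ ≠ σ := by
      intro e
      have := congrFun e k
      simp [hτdef] at this
    refine ⟨myF P hP hne τ, ⟨hball ?_, ⟨τ, rfl⟩⟩, ?_⟩
    · rw [Metric.mem_ball, dist_eq_norm]
      have := myF_close P hP hne k (fun i => (hagree i).symm)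
      calc ‖myF P hP hne τ - myF P hP hne σ‖ ≤ 4 * myR P hP hne k := this
        _ < ε := by linarith
    · intro e
      exact hτne (myF_inj P hP hne e)
  · exact ⟨myF P hP hne (fun _ => false), Set.mem_range_self _⟩
  · intro x hx a ha b hb
    obtain ⟨⟨σ, hσ⟩, a', ⟨τ, hτ⟩, ha'⟩ := ha
    obtain ⟨⟨σ', hσ'⟩, b', ⟨τ', hτ'⟩, hb'⟩ := hb
    have ha2 : a' + x = a := ha'
    have hb2 : b' + x = b := hb'
    have d1 : myF P hP hne σ - myF P hP hne τ = x := by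
      rw [hσ, hτ, ← ha2]; abel
    have d2 : myF P hP hne σ' - myF P hP hne τ' = x := by
      rw [hσ', hτ', ← hb2]; abel
    have hneq : myF P hP hne σ ≠ myF P hP hne τ := by
      intro e
      rw [e, sub_self] at d1
      exact hx d1.symm
    have := myF_key P hP hne (σ := σ) (τ := τ) (σ' := σ') (τ' := τ') (by rw [d1, d2]) hneq
    rw [← hσ, ← hσ', this]
end Final

/-- Every perfect set P ⊆ ℝⁿ contains a perfect subset Q such that
|Q ∩ (Q + x)| ≤ 1 for every x ≠ 0. -/
theorem stmt_7 (n : ℕ) (P : Set (Fin n → ℝ)) (hP : Perfect P) (hne : P.Nonempty) :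
    ∃ Q ⊆ P, Perfect Q ∧ Q.Nonempty ∧
      ∀ x : Fin n → ℝ, x ≠ 0 → (Q ∩ ((fun q => q + x) '' Q)).Subsingleton :=
  my_main P hP hne
end

section
/- Let Q ⊆ ℝ be a perfect set such that |Q ∩ (Q + x)| ≤ 1 for every x ≠ 0, and let B = {(x, y) ∈ ℝ² : y ∈ Q, y - x ∈ Q, x ≠ 0}. Then B is Borel, every vertical slice B_x = {y : (x,y) ∈ B} has at most one point, and for every y ∈ Q the horizontal slice B^y = {x : (x,y) ∈ B} equals (y - Q) \ {0}, which is uncountable. -/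
lemma perfect_not_countable {Q : Set ℝ} (hQ : Perfect Q) (hne : Q.Nonempty) :
    ¬ Q.Countable := by
  intro hc
  obtain ⟨f, hran, -, hinj⟩ := hQ.exists_nat_bool_injection hne
  have : (Set.univ : Set (ℕ → Bool)).Countable := by
    have := (hc.mono hran).preimage hinj
    simpa [Set.preimage_range] using this
  rw [Set.countable_univ_iff] at this
  have h2 : (2 : Cardinal) ^ Cardinal.aleph0 ≤ Cardinal.aleph0 := by
    have : Cardinal.mk (ℕ → Bool) ≤ Cardinal.aleph0 := Cardinal.mk_le_aleph0
    rwa [← Cardinal.power_def, Cardinal.mk_bool, Cardinal.mk_nat] at this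
  exact absurd h2 (Cardinal.cantor Cardinal.aleph0).not_ge

/-- Properties of B = {(x,y) : y ∈ Q, y - x ∈ Q, x ≠ 0} for a
perfect set Q with translates meeting it in at most one point. -/
theorem stmt_9 (Q : Set ℝ) (hQ : Perfect Q) (hne : Q.Nonempty)
    (hsmall : ∀ x : ℝ, x ≠ 0 → (Q ∩ ((fun q => q + x) '' Q)).Subsingleton)
    (B : Set (ℝ × ℝ)) (hB : B = {p : ℝ × ℝ | p.2 ∈ Q ∧ p.2 - p.1 ∈ Q ∧ p.1 ≠ 0}) :
    MeasurableSet B ∧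
    (∀ x : ℝ, ({y : ℝ | (x, y) ∈ B}).Subsingleton) ∧
    (∀ y ∈ Q, {x : ℝ | (x, y) ∈ B} = ((fun q => y - q) '' Q) \ {0} ∧
      ¬ ({x : ℝ | (x, y) ∈ B}).Countable) := by
  have hQm : MeasurableSet Q := hQ.closed.measurableSet
  subst hB
  refine ⟨?_, ?_, ?_⟩
  · have h1 : MeasurableSet {p : ℝ × ℝ | p.2 ∈ Q} := hQm.preimage measurable_snd
    have h2 : MeasurableSet {p : ℝ × ℝ | p.2 - p.1 ∈ Q} :=
      hQm.preimage (measurable_snd.sub measurable_fst)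
    have h3 : MeasurableSet {p : ℝ × ℝ | p.1 ≠ 0} :=
      (measurableSet_singleton (0:ℝ)).preimage measurable_fst |>.compl
    exact (h1.inter (h2.inter h3))
  · intro x y1 hy1 y2 hy2
    obtain ⟨h1, h2, h3⟩ := hy1
    obtain ⟨h1', h2', h3'⟩ := hy2
    exact hsmall x h3 ⟨h1, ⟨y1 - x, h2, by ring⟩⟩ ⟨h1', ⟨y2 - x, h2', by ring⟩⟩
  · intro y hy
    have heq : {x : ℝ | (x, y) ∈ {p : ℝ × ℝ | p.2 ∈ Q ∧ p.2 - p.1 ∈ Q ∧ p.1 ≠ 0}}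
        = ((fun q => y - q) '' Q) \ {0} := by
      ext x
      simp only [Set.mem_setOf_eq, Set.mem_diff, Set.mem_image, Set.mem_singleton_iff]
      constructor
      · rintro ⟨-, h2, h3⟩; exact ⟨⟨y - x, h2, by ring⟩, h3⟩
      · rintro ⟨⟨q, hq, rfl⟩, h3⟩; exact ⟨hy, by simpa using hq, h3⟩
    refine ⟨heq, ?_⟩
    rw [heq]
    intro hc
    have : ((fun q => y - q) '' Q).Countable := by
      have := hc.insert (0:ℝ)
      exact this.mono (by intro z hz; by_cases h : z = 0 <;> simp [h, hz] at *)
    have hQc : Q.Countable := by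
      have := this.image (fun z => y - z)
      refine this.mono ?_
      intro q hq
      exact ⟨y - q, ⟨q, hq, rfl⟩, by ring⟩
    exact perfect_not_countable hQ hne hQc
end

section
/- If I is a tall σ-ideal, then every set L ⊆ X of the form L = B Δ I' with B Borel and I' ∈ I, where B ∉ I, satisfies: there exists a perfect set P ∈ I with |L ∩ P| = c. In particular no I-Luzin set of cardinality continuum is I-measurable. -/
open Cardinal

/-- If I is tall then every set of the form B Δ I' with B Borel
I-positive, I' ∈ I, meets some perfect set from I in continuum many points;
in particular no I-Luzin set of cardinality continuum is I-measurable. -/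
theorem stmt_12 {X : Type*} [TopologicalSpace X] [PolishSpace X]
    [MeasurableSpace X] [BorelSpace X] (I : Set (Set X))
    (hdown : ∀ A B : Set X, A ⊆ B → B ∈ I → A ∈ I)
    (hunion : ∀ f : ℕ → Set X, (∀ n, f n ∈ I) → (⋃ n, f n) ∈ I)
    (hnontriv : (Set.univ : Set X) ∉ I)
    (hsing : ∀ x : X, ({x} : Set X) ∈ I)
    (hbase : ∀ A ∈ I, ∃ B : Set X, MeasurableSet B ∧ A ⊆ B ∧ B ∈ I)
    (htall : ∀ B : Set X, MeasurableSet B → B ∉ I →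
      ∃ P ⊆ B, Perfect P ∧ P.Nonempty ∧ P ∈ I) :
    (∀ L B I' : Set X, MeasurableSet B → B ∉ I → I' ∈ I → L = symmDiff B I' →
      ∃ P : Set X, Perfect P ∧ P.Nonempty ∧ P ∈ I ∧
        #(↥(L ∩ P)) = Cardinal.continuum) ∧
    (∀ L : Set X, #(↥L) = Cardinal.continuum →
      (∀ I' ∈ I, #(↥(L ∩ I')) < #(↥L)) →
      ¬ @MeasurableSet X (MeasurableSpace.generateFrom
        {s : Set X | MeasurableSet s ∨ s ∈ I}) L) := by
  -- cardinality of nonempty perfect sets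
  have hperf : ∀ P : Set X, Perfect P → P.Nonempty → #(↥P) = Cardinal.continuum := by
    intro P hP hne
    letI := TopologicalSpace.upgradeIsCompletelyMetrizable X
    obtain ⟨f, hfr, -, hfi⟩ := hP.exists_nat_bool_injection hne
    apply le_antisymm
    · obtain ⟨b, hbc, -, hb⟩ := TopologicalSpace.exists_countable_basis X
      have hX : #X ≤ Cardinal.continuum := by
        have hinj : Function.Injective (fun x : X => {s : ↥b | x ∈ (s : Set X)}) := by
          intro x y hxy
          rw [hb.eq_iff]
          intro s hs
          constructor
          · intro h; have := congrArg (fun t => (⟨s, hs⟩ : ↥b) ∈ t) hxy; simpa [h] using this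
          · intro h; have := congrArg (fun t => (⟨s, hs⟩ : ↥b) ∈ t) hxy; simpa [h] using this
        calc #X ≤ #(Set ↥b) := Cardinal.mk_le_of_injective hinj
          _ = 2 ^ #(↥b) := Cardinal.mk_set
          _ ≤ 2 ^ Cardinal.aleph0 := Cardinal.power_le_power_left two_ne_zero
              (by have := hbc.to_subtype; exact Cardinal.mk_le_aleph0)
          _ = Cardinal.continuum := Cardinal.two_power_aleph0
      exact le_trans (Cardinal.mk_le_mk_of_subset (Set.subset_univ P)) (by simpa using hX)
    · have h1 : #(ℕ → Bool) = Cardinal.continuum := by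
        simp [Cardinal.mk_arrow, Cardinal.two_power_aleph0]
      have h2 := Cardinal.lift_mk_le'.mpr ⟨⟨fun g => (⟨f g, hfr ⟨g, rfl⟩⟩ : ↥P),
        fun a b h => hfi (congrArg Subtype.val h)⟩⟩
      rw [h1] at h2
      simpa [Cardinal.lift_continuum] using h2
  have key : ∀ L B I' : Set X, MeasurableSet B → B ∉ I → I' ∈ I → L = symmDiff B I' →
      ∃ P : Set X, Perfect P ∧ P.Nonempty ∧ P ∈ I ∧
        #(↥(L ∩ P)) = Cardinal.continuum := by
    rintro L B I' hB hBI hI' rfl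
    obtain ⟨C, hCmeas, hI'C, hCI⟩ := hbase I' hI'
    have hBC : B \ C ∉ I := by
      intro h
      apply hBI
      refine hdown B _ (fun x hx => ?_) (hunion (fun n => if n = 0 then B \ C else C)
        (by intro n; split <;> assumption))
      by_cases hxc : x ∈ C
      · exact Set.mem_iUnion.2 ⟨1, by simpa using hxc⟩
      · exact Set.mem_iUnion.2 ⟨0, by simp [hx, hxc]⟩
    obtain ⟨P, hPsub, hPperf, hPne, hPI⟩ := htall (B \ C) (hB.diff hCmeas) hBC
    refine ⟨P, hPperf, hPne, hPI, ?_⟩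
    have hPL : P ⊆ symmDiff B I' := by
      intro x hx
      have hxB : x ∈ B := (hPsub hx).1
      have hxI : x ∉ I' := fun h => (hPsub hx).2 (hI'C h)
      rw [Set.mem_symmDiff]
      exact Or.inl ⟨hxB, hxI⟩
    rw [Set.inter_eq_self_of_subset_right hPL]
    exact hperf P hPperf hPne
  refine ⟨key, ?_⟩
  intro L hLcard hLuzin hmeas
  have hne : L.Nonempty := by
    rw [Set.nonempty_iff_ne_empty]
    rintro rfl
    rw [Cardinal.mk_emptyCollection] at hLcard
    exact Cardinal.continuum_ne_zero hLcard.symm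
  obtain ⟨x0, hx0⟩ := hne
  have hempty : (∅ : Set X) ∈ I := hdown ∅ {x0} (by simp) (hsing x0)
  have hunion2 : ∀ A B' : Set X, A ∈ I → B' ∈ I → A ∪ B' ∈ I := by
    intro A B' hA hB'
    refine hdown _ _ (fun x hx => ?_) (hunion (fun n => if n = 0 then A else B')
      (by intro n; split <;> assumption))
    rcases hx with h | h
    · exact Set.mem_iUnion.2 ⟨0, by simpa using h⟩
    · exact Set.mem_iUnion.2 ⟨1, by simpa using h⟩
  -- every set in the generated σ-algebra has a B Δ I' representation
  have hQ : ∃ B I'' : Set X, MeasurableSet B ∧ I'' ∈ I ∧ L = symmDiff B I'' := by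
    refine MeasurableSpace.generateFrom_induction {s : Set X | MeasurableSet s ∨ s ∈ I}
      (fun s _ => ∃ B I'' : Set X, MeasurableSet B ∧ I'' ∈ I ∧ s = symmDiff B I'')
      ?_ ?_ ?_ ?_ L hmeas
    · rintro t (ht | ht) _
      · exact ⟨t, ∅, ht, hempty, (symmDiff_bot t).symm⟩
      · exact ⟨∅, t, MeasurableSet.empty, ht, (bot_symmDiff t).symm⟩
    · exact ⟨∅, ∅, MeasurableSet.empty, hempty, (bot_symmDiff ∅).symm⟩
    · rintro t _ ⟨B, I'', hB, hI'', rfl⟩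
      refine ⟨Bᶜ, I'', hB.compl, hI'', ?_⟩
      ext x
      simp only [Set.mem_compl_iff, Set.mem_symmDiff]
      tauto
    · rintro s hs hrep
      choose B I'' hB hI'' hrepr using hrep
      refine ⟨⋃ n, B n, symmDiff (⋃ n, B n) (⋃ n, s n), MeasurableSet.iUnion hB, ?_, ?_⟩
      · refine hdown _ (⋃ n, I'' n) (fun x hx => ?_) (hunion _ hI'')
        rw [Set.mem_symmDiff] at hx
        rcases hx with ⟨hx1, hx2⟩ | ⟨hx1, hx2⟩
        · obtain ⟨n, hn⟩ := Set.mem_iUnion.1 hx1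
          have hxs : x ∉ s n := fun h => hx2 (Set.mem_iUnion.2 ⟨n, h⟩)
          refine Set.mem_iUnion.2 ⟨n, ?_⟩
          rw [hrepr n, Set.mem_symmDiff] at hxs
          tauto
        · obtain ⟨n, hn⟩ := Set.mem_iUnion.1 hx1
          have hxB : x ∉ B n := fun h => hx2 (Set.mem_iUnion.2 ⟨n, h⟩)
          refine Set.mem_iUnion.2 ⟨n, ?_⟩
          rw [hrepr n, Set.mem_symmDiff] at hn
          tauto
      · rw [symmDiff_symmDiff_cancel_left]
  obtain ⟨B, I'', hB, hI'', hLrep⟩ := hQ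
  by_cases hBI : B ∈ I
  · have hLsub : L ⊆ B ∪ I'' := by
      rw [hLrep]
      intro x hx
      rw [Set.mem_symmDiff] at hx
      tauto
    have hmem := hLuzin (B ∪ I'') (hunion2 B I'' hBI hI'')
    rw [Set.inter_eq_self_of_subset_left hLsub] at hmem
    exact lt_irrefl _ hmem
  · obtain ⟨P, _, _, hPI, hPcard⟩ := key L B I'' hB hBI hI'' hLrep
    have := hLuzin P hPI
    rw [hPcard, hLcard] at this
    exact lt_irrefl _ this
end
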